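/- Equivalently stated via colourings: for integers n ≥ m ≥ 1, with X = {0,…,n} and Y = {0,…,m}, there exists a colouring c : X⁺ → Y of the (n+1)-ary Cantor tree such that the induced map c̃ : X^ω → Y^ω, c̃(x₁x₂x₃…) = c(x₁)c(x₁x₂)c(x₁x₂x₃)…, is a bijection. Combined with the non-surjectivity when n < m, a bijective colouring exists if and only if n ≥ m. -/

import Mathlib

namespace S14

structure St where
  t : ℕ
  lo : ℕ
  hi : ℕ

structure Good (b : ℕ) (σ : St) : Prop where
  lo_le : σ.lo ≤ σ.hi
  hi_lt : σ.hi < b ^ σ.t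
  floor_eq : σ.lo / b = σ.hi / b
  t_pos : 1 ≤ σ.t

def NN (σ : St) : ℕ := σ.hi + 1 - σ.lo

def fd (a b G x : ℕ) : ℕ := min (b * x) (G * b - a + x)

def rr (a b : ℕ) (σ : St) : ℕ :=
  Nat.find (p := fun r => 1 ≤ r ∧ (a ≤ NN σ * b ^ r ∨ a ≤ r))
    ⟨max 1 a, le_max_left _ _, Or.inr (le_max_right _ _)⟩

def step (a b : ℕ) (σ : St) (x : ℕ) : St :=
  ⟨σ.t + rr a b σ,
   σ.lo * b ^ rr a b σ + fd a b (NN σ * b ^ (rr a b σ - 1)) x,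
   σ.lo * b ^ rr a b σ + fd a b (NN σ * b ^ (rr a b σ - 1)) (x + 1) - 1⟩

def init (b : ℕ) : St := ⟨1, 0, b - 1⟩

def runL (a b : ℕ) (w : List ℕ) : St := w.foldl (step a b) (init b)

def dW (b : ℕ) (σ : St) (i : ℕ) : ℕ := σ.lo / b / b ^ (σ.t - 2 - i) % b

def cw (a b : ℕ) (w : List ℕ) : ℕ := dW b (runL a b w) (w.length - 1)

def FF (a b : ℕ) (u : ℕ → ℕ) (k : ℕ) : St := runL a b (List.ofFn fun i : Fin k => u i)

def ct (a b : ℕ) (u : ℕ → ℕ) (k : ℕ) : ℕ := cw a b (List.ofFn fun i : Fin (k + 1) => u i)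

def VV (b : ℕ) (y : ℕ → ℕ) : ℕ → ℕ
  | 0 => 0
  | t + 1 => VV b y t * b + y t

variable {a b : ℕ}

/-! ### fd lemmas -/

lemma fd_zero (G : ℕ) : fd a b G 0 = 0 := by simp [fd]

lemma fd_mono (G : ℕ) : Monotone (fd a b G) := by
  intro x y h
  exact min_le_min (Nat.mul_le_mul_left _ h) (by omega)

lemma fd_strict (hb : 1 ≤ b) (G : ℕ) {x y : ℕ} (h : x < y) : fd a b G x < fd a b G y := by
  apply lt_min
  · exact (min_le_left _ _).trans_lt (Nat.mul_lt_mul_of_pos_left h (by omega))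
  · exact (min_le_right _ _).trans_lt (by omega)

lemma fd_pos (hb : 1 ≤ b) (G x : ℕ) : 1 ≤ fd a b G (x + 1) := by
  have h := fd_strict (a := a) hb G (show 0 < x + 1 by omega)
  rw [fd_zero] at h
  omega

lemma fd_last (hGa : G ≤ a) (haGb : a ≤ G * b) : fd a b G a = G * b := by
  unfold fd
  have h1 : G * b - a + a = G * b := by omega
  rw [h1]
  refine min_eq_right ?_
  calc G * b ≤ a * b := Nat.mul_le_mul_right _ hGa
    _ = b * a := Nat.mul_comm _ _

lemma fd_div (hb : 1 ≤ b) (G : ℕ) (x : ℕ) :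
    fd a b G (x + 1) ≤ b * (fd a b G x / b) + b := by
  rcases le_or_gt (b * x) (G * b - a + x) with h | h
  · have hx : fd a b G x = b * x := min_eq_left h
    have h2 : fd a b G (x + 1) ≤ b * (x + 1) := min_le_left _ _
    have h3 : b * (x + 1) = b * x + b := by ring
    rw [hx, Nat.mul_div_cancel_left x (by omega)]
    omega
  · have hx : fd a b G x = G * b - a + x := min_eq_right (le_of_lt h)
    have h2 : fd a b G (x + 1) ≤ G * b - a + (x + 1) := min_le_right _ _
    have h3 : G * b - a + x < b * ((G * b - a + x) / b) + b := by
      have h4 := Nat.div_add_mod (G * b - a + x) b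
      have h5 : (G * b - a + x) % b < b := Nat.mod_lt _ (by omega)
      omega
    rw [hx]
    omega

/-! ### basic state lemmas -/

lemma NN_le (hb : 1 ≤ b) {σ : St} (h : Good b σ) : 1 ≤ NN σ ∧ NN σ ≤ b := by
  have h6 := h.lo_le
  constructor
  · unfold NN; omega
  · by_contra hcon
    have hbig : σ.lo + b ≤ σ.hi := by unfold NN at hcon; omega
    have h1 : (σ.lo + b) / b ≤ σ.hi / b := Nat.div_le_div_right hbig
    rw [Nat.add_div_right _ (by omega)] at h1
    rw [← h.floor_eq] at h1
    omega

lemma rr_spec (hb : 2 ≤ b) (hab : b ≤ a) {σ : St} (hN1 : 1 ≤ NN σ) (hNb : NN σ ≤ b) :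
    1 ≤ rr a b σ ∧ a ≤ NN σ * b ^ rr a b σ ∧ NN σ * b ^ (rr a b σ - 1) ≤ a := by
  have hex : ∃ r, 1 ≤ r ∧ (a ≤ NN σ * b ^ r ∨ a ≤ r) :=
    ⟨max 1 a, le_max_left _ _, Or.inr (le_max_right _ _)⟩
  have hspec : 1 ≤ rr a b σ ∧ (a ≤ NN σ * b ^ rr a b σ ∨ a ≤ rr a b σ) :=
    Nat.find_spec hex
  have key : ∀ r : ℕ, a ≤ r → a ≤ NN σ * b ^ r := by
    intro r hr
    refine le_of_lt ?_
    calc a ≤ r := hr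
      _ < 2 ^ r := Nat.lt_two_pow_self (n := r)
      _ ≤ b ^ r := Nat.pow_le_pow_left hb r
      _ ≤ NN σ * b ^ r := Nat.le_mul_of_pos_left _ hN1
  have h2 : a ≤ NN σ * b ^ rr a b σ := by
    rcases hspec.2 with h | h
    · exact h
    · exact key _ h
  refine ⟨hspec.1, h2, ?_⟩
  rcases Nat.eq_or_lt_of_le hspec.1 with h | h
  · rw [← h]
    simpa using hNb.trans hab
  · have hfind : rr a b σ = Nat.find hex := rfl
    have hmin : ¬(1 ≤ rr a b σ - 1 ∧
        (a ≤ NN σ * b ^ (rr a b σ - 1) ∨ a ≤ rr a b σ - 1)) :=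
      Nat.find_min hex (show rr a b σ - 1 < Nat.find hex by rw [← hfind]; omega)
    push_neg at hmin
    have := hmin (by omega)
    rcases this with ⟨hl, hr⟩
    exact le_of_lt hl

/-- The big step lemma: everything we need about one transition. -/
lemma step_all (hb : 2 ≤ b) (hab : b ≤ a) {σ : St} (h : Good b σ) :
    (∀ x, (step a b σ x).t = σ.t + rr a b σ) ∧
    (step a b σ 0).lo = σ.lo * b ^ rr a b σ ∧
    (∀ x, (step a b σ x).hi + 1 = (step a b σ (x + 1)).lo) ∧
    (step a b σ (a - 1)).hi + 1 = (σ.hi + 1) * b ^ rr a b σ ∧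
    (∀ x, x < a → Good b (step a b σ x)) ∧
    (∀ x, x < a → σ.lo * b ^ rr a b σ ≤ (step a b σ x).lo ∧
      (step a b σ x).hi + 1 ≤ (σ.hi + 1) * b ^ rr a b σ) ∧
    (∀ x y, x < y → y < a → (step a b σ x).hi < (step a b σ y).lo) ∧
    1 ≤ rr a b σ := by
  obtain ⟨hN1, hNb⟩ := NN_le (by omega) h
  obtain ⟨hr1, hra, hGa⟩ := rr_spec hb hab hN1 hNb
  set r := rr a b σ with hrdef
  set G := NN σ * b ^ (r - 1) with hGdef
  have hGb : G * b = NN σ * b ^ r := by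
    rw [hGdef, Nat.mul_assoc, ← Nat.pow_succ]
    congr 2
    omega
  have haGb : a ≤ G * b := by rw [hGb]; exact hra
  have hb1 : (1:ℕ) ≤ b := by omega
  have hbr : 0 < b ^ r := pow_pos (by omega) _
  have hlon : σ.lo + NN σ = σ.hi + 1 := by unfold NN; have := h.lo_le; omega
  have hHI : ∀ x, (step a b σ x).hi + 1 = σ.lo * b ^ r + fd a b G (x + 1) := by
    intro x
    show σ.lo * b ^ r + fd a b G (x + 1) - 1 + 1 = _
    have := fd_pos (a := a) hb1 G x
    omega
  have hLO : ∀ x, (step a b σ x).lo = σ.lo * b ^ r + fd a b G x := fun x => rfl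
  have hupper : ∀ x, x + 1 ≤ a → (step a b σ x).hi + 1 ≤ (σ.hi + 1) * b ^ r := by
    intro x hx
    rw [hHI x]
    have h1 : fd a b G (x + 1) ≤ fd a b G a := fd_mono G hx
    rw [fd_last hGa haGb] at h1
    calc σ.lo * b ^ r + fd a b G (x + 1) ≤ σ.lo * b ^ r + G * b := by omega
      _ = σ.lo * b ^ r + NN σ * b ^ r := by rw [hGb]
      _ = (σ.lo + NN σ) * b ^ r := (Nat.add_mul _ _ _).symm
      _ = (σ.hi + 1) * b ^ r := by rw [hlon]
  refine ⟨fun x => rfl, ?_, ?_, ?_, ?_, ?_, ?_, hr1⟩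
  · rw [hLO 0, fd_zero]
    omega
  · intro x
    rw [hHI x, hLO (x + 1)]
  · have ha1 : 1 ≤ a := by omega
    rw [hHI (a - 1)]
    have : a - 1 + 1 = a := by omega
    rw [this, fd_last hGa haGb, hGb]
    calc σ.lo * b ^ r + NN σ * b ^ r = (σ.lo + NN σ) * b ^ r := (Nat.add_mul _ _ _).symm
      _ = (σ.hi + 1) * b ^ r := by rw [hlon]
  · intro x hx
    have hlt := fd_strict (a := a) hb1 G (show x < x + 1 by omega)
    have h1 := hupper x hx
    have h2 : σ.hi + 1 ≤ b ^ σ.t := h.hi_lt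
    have h2' : (σ.hi + 1) * b ^ r ≤ b ^ σ.t * b ^ r := Nat.mul_le_mul_right _ h2
    have h3 : b ^ σ.t * b ^ r = b ^ (σ.t + r) := (pow_add b σ.t r).symm
    have h4 := hHI x
    have h5 := hLO x
    refine ⟨?_, ?_, ?_, ?_⟩
    · omega
    · show (step a b σ x).hi < b ^ (σ.t + r)
      omega
    · have e1 : σ.lo * b ^ r = b * (σ.lo * b ^ (r - 1)) := by
        calc σ.lo * b ^ r = σ.lo * (b * b ^ (r - 1)) := by
              congr 1
              rw [← Nat.pow_succ']
              congr 1
              omega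
          _ = b * (σ.lo * b ^ (r - 1)) := by ring
      have hdiv : (fd a b G (x + 1) - 1) / b = fd a b G x / b := by
        apply Nat.div_eq_of_lt_le
        · calc fd a b G x / b * b ≤ fd a b G x := Nat.div_mul_le_self _ _
            _ ≤ fd a b G (x + 1) - 1 := by omega
        · have h6 := fd_div (a := a) hb1 G x
          have h7 : (fd a b G x / b + 1) * b = b * (fd a b G x / b) + b := by ring
          omega
      show (σ.lo * b ^ r + fd a b G x) / b
          = (σ.lo * b ^ r + fd a b G (x + 1) - 1) / b
      have e2 : σ.lo * b ^ r + fd a b G (x + 1) - 1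
          = b * (σ.lo * b ^ (r - 1)) + (fd a b G (x + 1) - 1) := by
        have := fd_pos (a := a) hb1 G x
        omega
      rw [e2, e1, Nat.mul_add_div (by omega), Nat.mul_add_div (by omega), hdiv]
    · show 1 ≤ σ.t + r
      omega
  · intro x hx
    refine ⟨Nat.le_add_right _ _, hupper x hx⟩
  · intro x y hxy hy
    have h1 := hHI x
    have h2 := hLO y
    have h3 : fd a b G (x + 1) ≤ fd a b G y := fd_mono G hxy
    omega


/-! ### running along a sequence -/

lemma good_init (hb : 2 ≤ b) : Good b (init b) :=
  ⟨Nat.zero_le _, by show b - 1 < b ^ 1; rw [pow_one]; omega,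
   by show (0:ℕ)/b = (b-1)/b; rw [Nat.zero_div, Nat.div_eq_of_lt (by omega)], le_refl 1⟩

lemma FF_succ (u : ℕ → ℕ) (k : ℕ) :
    FF a b u (k + 1) = step a b (FF a b u k) (u k) := by
  have h := List.ofFn_succ' (f := fun i : Fin (k + 1) => u i)
  unfold FF runL
  rw [h, List.concat_eq_append, List.foldl_concat]
  rfl

lemma FF_good (hb : 2 ≤ b) (hab : b ≤ a) {u : ℕ → ℕ} (hu : ∀ i, u i < a) (k : ℕ) :
    Good b (FF a b u k) ∧ k + 1 ≤ (FF a b u k).t := by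
  induction k with
  | zero => exact ⟨good_init hb, le_refl 1⟩
  | succ k ih =>
    obtain ⟨hg, ht⟩ := ih
    obtain ⟨hC1, _, _, _, hC5, _, _, hr1⟩ := step_all hb hab hg
    rw [FF_succ]
    exact ⟨hC5 _ (hu k), by rw [hC1]; omega⟩

lemma FF_nest (hb : 2 ≤ b) (hab : b ≤ a) {u : ℕ → ℕ} (hu : ∀ i, u i < a) {k : ℕ} :
    ∀ j, k ≤ j → ∃ d, (FF a b u j).t = (FF a b u k).t + d ∧
      (FF a b u k).lo * b ^ d ≤ (FF a b u j).lo ∧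
      (FF a b u j).hi + 1 ≤ ((FF a b u k).hi + 1) * b ^ d ∧
      (k < j → 1 ≤ d) := by
  intro j
  induction j with
  | zero =>
    intro hj
    have hk0 : k = 0 := by omega
    subst hk0
    exact ⟨0, by simp, by simp, by simp, by omega⟩
  | succ j ih =>
    intro hj
    rcases Nat.eq_or_lt_of_le hj with he | hlt
    · subst he
      exact ⟨0, by simp, by simp, by simp, by omega⟩
    · have hkj : k ≤ j := by omega
      obtain ⟨d, ht, h1, h2, _⟩ := ih hkj
      have hg := (FF_good hb hab hu j).1
      obtain ⟨hC1, _, _, _, _, hC6, _, hr1⟩ := step_all hb hab hg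
      obtain ⟨h6l, h6r⟩ := hC6 (u j) (hu j)
      refine ⟨d + rr a b (FF a b u j), ?_, ?_, ?_, by omega⟩
      · rw [FF_succ, hC1, ht]; omega
      · rw [FF_succ]
        calc (FF a b u k).lo * b ^ (d + rr a b (FF a b u j))
            = ((FF a b u k).lo * b ^ d) * b ^ rr a b (FF a b u j) := by
              rw [pow_add, mul_assoc]
          _ ≤ (FF a b u j).lo * b ^ rr a b (FF a b u j) := Nat.mul_le_mul_right _ h1
          _ ≤ _ := h6l
      · rw [FF_succ]
        calc (step a b (FF a b u j) (u j)).hi + 1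
            ≤ ((FF a b u j).hi + 1) * b ^ rr a b (FF a b u j) := h6r
          _ ≤ (((FF a b u k).hi + 1) * b ^ d) * b ^ rr a b (FF a b u j) :=
              Nat.mul_le_mul_right _ h2
          _ = ((FF a b u k).hi + 1) * b ^ (d + rr a b (FF a b u j)) := by
              rw [pow_add, mul_assoc]

/-! ### digit lemmas -/

lemma W_lt (hb : 2 ≤ b) {σ : St} (h : Good b σ) : σ.lo / b < b ^ (σ.t - 1) := by
  have h0 : b ^ (σ.t - 1) * b = b ^ σ.t := by
    rw [← pow_succ]
    congr 1
    have := h.t_pos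
    omega
  have h1 : σ.lo < b ^ (σ.t - 1) * b := by
    rw [h0]; exact lt_of_le_of_lt h.lo_le h.hi_lt
  exact (Nat.div_lt_iff_lt_mul (by omega)).2 h1

lemma div_mem {lo hi loj hij d : ℕ} (hb0 : 0 < b)
    (h1 : lo * b ^ d ≤ loj) (h2 : hij + 1 ≤ (hi + 1) * b ^ d) (h3 : loj ≤ hij) :
    lo ≤ loj / b ^ d ∧ loj / b ^ d ≤ hi := by
  have hp : 0 < b ^ d := pow_pos hb0 d
  constructor
  · have h4 : lo * b ^ d / b ^ d ≤ loj / b ^ d := Nat.div_le_div_right h1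
    rwa [Nat.mul_div_cancel _ hp] at h4
  · have h4 : loj < (hi + 1) * b ^ d := by omega
    have h5 := (Nat.div_lt_iff_lt_mul hp).2 h4
    omega

lemma W_chain (hb0 : 0 < b) {lo hi loj d : ℕ} (hfl : lo / b = hi / b)
    (h1 : lo * b ^ d ≤ loj) (h2 : loj + 1 ≤ (hi + 1) * b ^ d) :
    loj / b ^ d / b = lo / b := by
  obtain ⟨hl, hr⟩ := div_mem hb0 h1 h2 (le_refl loj)
  have l1 : lo / b ≤ loj / b ^ d / b := Nat.div_le_div_right hl
  have l2 : loj / b ^ d / b ≤ hi / b := Nat.div_le_div_right hr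
  omega

lemma dW_stable (hb : 2 ≤ b) (hab : b ≤ a) {u : ℕ → ℕ} (hu : ∀ i, u i < a)
    {s j : ℕ} (hsj : s + 1 ≤ j) :
    dW b (FF a b u j) s = dW b (FF a b u (s + 1)) s := by
  obtain ⟨d, ht, h1, h2, -⟩ := FF_nest hb hab hu j hsj
  obtain ⟨hgk, htk⟩ := FF_good hb hab hu (s + 1)
  obtain ⟨hgj, htj⟩ := FF_good hb hab hu j
  have hb0 : 0 < b := by omega
  have hW : (FF a b u j).lo / b ^ d / b = (FF a b u (s + 1)).lo / b :=
    W_chain hb0 hgk.floor_eq h1 (by have := hgj.lo_le; omega)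
  have comm : ∀ x : ℕ, x / b / b ^ d = x / b ^ d / b := by
    intro x
    rw [Nat.div_div_eq_div_mul, Nat.div_div_eq_div_mul, mul_comm]
  unfold dW
  rw [ht]
  have he : (FF a b u (s + 1)).t + d - 2 - s = d + ((FF a b u (s + 1)).t - 2 - s) := by
    omega
  rw [he, pow_add, ← Nat.div_div_eq_div_mul, comm, hW]

lemma ct_eq_dW (u : ℕ → ℕ) (k : ℕ) : ct a b u k = dW b (FF a b u (k + 1)) k := by
  simp [ct, cw, FF]

lemma VV_ct (hb : 2 ≤ b) (hab : b ≤ a) {u : ℕ → ℕ} (hu : ∀ i, u i < a) :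
    ∀ s j, s ≤ j →
      VV b (ct a b u) s = (FF a b u j).lo / b / b ^ ((FF a b u j).t - 1 - s) := by
  intro s
  induction s with
  | zero =>
    intro j _
    have hg := (FF_good hb hab hu j).1
    have hW := W_lt hb hg
    show 0 = _
    symm
    simp only [Nat.sub_zero]
    exact Nat.div_eq_of_lt hW
  | succ s ih =>
    intro j hj
    have ihs := ih j (by omega)
    obtain ⟨hgj, htj⟩ := FF_good hb hab hu j
    show VV b (ct a b u) s * b + ct a b u s = _
    rw [ihs, ct_eq_dW, ← dW_stable hb hab hu hj]
    unfold dW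
    have htj2 : s + 2 ≤ (FF a b u j).t := by omega
    have he1 : (FF a b u j).t - 1 - s = ((FF a b u j).t - 2 - s) + 1 := by omega
    have he2 : (FF a b u j).t - 1 - (s + 1) = (FF a b u j).t - 2 - s := by omega
    rw [he1, he2, pow_succ, ← Nat.div_div_eq_div_mul, Nat.mul_comm]
    exact Nat.div_add_mod _ b

lemma mem_ct (hb : 2 ≤ b) (hab : b ≤ a) {u : ℕ → ℕ} (hu : ∀ i, u i < a) (k : ℕ) :
    (FF a b u k).lo ≤ VV b (ct a b u) ((FF a b u k).t) ∧
    VV b (ct a b u) ((FF a b u k).t) ≤ (FF a b u k).hi := by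
  obtain ⟨hgk, htk⟩ := FF_good hb hab hu k
  have hkj : k ≤ k + (FF a b u k).t := by omega
  have hV := VV_ct hb hab hu ((FF a b u k).t) (k + (FF a b u k).t) (by omega)
  obtain ⟨d, ht, h1, h2, hd1⟩ := FF_nest hb hab hu (k + (FF a b u k).t) hkj
  have hd : 1 ≤ d := hd1 (by omega)
  obtain ⟨hgj, htj⟩ := FF_good hb hab hu (k + (FF a b u k).t)
  have he : (FF a b u (k + (FF a b u k).t)).t - 1 - (FF a b u k).t = d - 1 := by omega
  rw [he] at hV
  have hcomm : (FF a b u (k + (FF a b u k).t)).lo / b / b ^ (d - 1)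
      = (FF a b u (k + (FF a b u k).t)).lo / b ^ d := by
    rw [Nat.div_div_eq_div_mul, ← pow_succ']
    have hdd : d - 1 + 1 = d := by omega
    rw [hdd]
  rw [hcomm] at hV
  rw [hV]
  exact div_mem (by omega) h1 h2 hgj.lo_le

/-! ### injectivity -/

lemma ct_inj (hb : 2 ≤ b) (hab : b ≤ a) {u u' : ℕ → ℕ}
    (hu : ∀ i, u i < a) (hu' : ∀ i, u' i < a) (hne : u ≠ u') :
    ct a b u ≠ ct a b u' := by
  have hex : ∃ k, u k ≠ u' k := by
    by_contra hc; push_neg at hc; exact hne (funext hc)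
  set k := Nat.find hex with hk
  have hkdiff : u k ≠ u' k := Nat.find_spec hex
  have hkmin : ∀ i, i < k → u i = u' i := by
    intro i hi
    have := Nat.find_min hex hi
    push_neg at this
    exact this
  have hFFk : FF a b u k = FF a b u' k := by
    unfold FF
    rw [congrArg List.ofFn (funext fun i : Fin k => hkmin i i.isLt)]
  have key : ∀ v v' : ℕ → ℕ, (∀ i, v i < a) → (∀ i, v' i < a) →
      FF a b v k = FF a b v' k → v k < v' k →
      VV b (ct a b v) ((FF a b v (k + 1)).t) <
        VV b (ct a b v') ((FF a b v' (k + 1)).t) := by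
    intro v v' hv hv' hFF hlt
    have hg := (FF_good hb hab hv k).1
    obtain ⟨_, _, _, _, _, _, hC8, _⟩ := step_all hb hab hg
    have hm := mem_ct hb hab hv (k + 1)
    have hm' := mem_ct hb hab hv' (k + 1)
    have e1 : FF a b v (k + 1) = step a b (FF a b v k) (v k) := FF_succ _ _
    have e2 : FF a b v' (k + 1) = step a b (FF a b v k) (v' k) := by
      rw [FF_succ, ← hFF]
    have hdisj := hC8 (v k) (v' k) hlt (hv' k)
    rw [e1] at hm
    rw [e2] at hm'
    rw [e1, e2]
    omega
  intro hcteq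
  have hteq : (FF a b u (k + 1)).t = (FF a b u' (k + 1)).t := by
    rw [FF_succ, FF_succ, hFFk]
    rfl
  rcases lt_trichotomy (u k) (u' k) with hlt | heq | hgt
  · have hlt2 := key u u' hu hu' hFFk hlt
    rw [hcteq, hteq] at hlt2
    exact lt_irrefl _ hlt2
  · exact hkdiff heq
  · have hlt2 := key u' u hu' hu hFFk.symm hgt
    rw [hcteq, hteq] at hlt2
    exact lt_irrefl _ hlt2

/-! ### VV digit extraction -/

lemma VV_div_pow {y : ℕ → ℕ} (hy : ∀ i, y i < b) (hb0 : 0 < b) :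
    ∀ t d, VV b y (t + d) / b ^ d = VV b y t := by
  intro t d
  induction d with
  | zero => simp
  | succ d ih =>
    show (VV b y (t + d) * b + y (t + d)) / b ^ (d + 1) = _
    rw [pow_succ', ← Nat.div_div_eq_div_mul]
    have h1 : (VV b y (t + d) * b + y (t + d)) / b = VV b y (t + d) := by
      rw [Nat.mul_comm (VV b y (t + d)) b, Nat.mul_add_div hb0,
        Nat.div_eq_of_lt (hy _)]
      omega
    rw [h1, ih]

lemma VV_digit {y : ℕ → ℕ} (hb0 : 0 < b) (hy : ∀ i, y i < b) :
    ∀ t i, i < t → VV b y t / b ^ (t - 1 - i) % b = y i := by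
  intro t
  induction t with
  | zero => omega
  | succ t ih =>
    intro i hi
    rcases Nat.lt_or_ge i t with h | h
    · have he : t + 1 - 1 - i = (t - 1 - i) + 1 := by omega
      rw [he, pow_succ', ← Nat.div_div_eq_div_mul]
      have h1 : VV b y (t + 1) / b = VV b y t := by
        show (VV b y t * b + y t) / b = _
        rw [Nat.mul_comm (VV b y t) b, Nat.mul_add_div hb0, Nat.div_eq_of_lt (hy _)]
        omega
      rw [h1]
      exact ih i h
    · have hit : i = t := by omega
      subst hit
      have he : i + 1 - 1 - i = 0 := by omega
      rw [he, pow_zero, Nat.div_one]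
      show (VV b y i * b + y i) % b = y i
      rw [Nat.mul_comm (VV b y i) b, Nat.mul_add_mod]
      exact Nat.mod_eq_of_lt (hy i)

/-! ### surjectivity -/

def pk (a b : ℕ) (y : ℕ → ℕ) (σ : St) : ℕ :=
  Nat.findGreatest (fun x => (step a b σ x).lo ≤ VV b y (σ.t + rr a b σ)) (a - 1)

def GG (a b : ℕ) (y : ℕ → ℕ) : ℕ → St
  | 0 => init b
  | k + 1 => step a b (GG a b y k) (pk a b y (GG a b y k))

def uy (a b : ℕ) (y : ℕ → ℕ) (k : ℕ) : ℕ := pk a b y (GG a b y k)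

lemma uy_lt (ha : 2 ≤ a) (y : ℕ → ℕ) (k : ℕ) : uy a b y k < a :=
  lt_of_le_of_lt (Nat.findGreatest_le _) (by omega)

lemma FF_uy {y : ℕ → ℕ} : ∀ k, FF a b (uy a b y) k = GG a b y k := by
  intro k
  induction k with
  | zero => rfl
  | succ k ih => rw [FF_succ, ih]; rfl

lemma GG_inv (hb : 2 ≤ b) (hab : b ≤ a) {y : ℕ → ℕ} (hy : ∀ i, y i < b) :
    ∀ k, Good b (GG a b y k) ∧ (GG a b y k).lo ≤ VV b y ((GG a b y k).t) ∧
      VV b y ((GG a b y k).t) ≤ (GG a b y k).hi := by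
  intro k
  induction k with
  | zero =>
    refine ⟨good_init hb, ?_, ?_⟩
    · show (0:ℕ) ≤ VV b y 1
      exact Nat.zero_le _
    · show VV b y 1 ≤ b - 1
      have := hy 0
      show VV b y 0 * b + y 0 ≤ b - 1
      simp [VV]
      omega
  | succ k ih =>
    obtain ⟨hg, hl, hr⟩ := ih
    obtain ⟨hC1, hC2, hC3, hC4, hC5, hC6, hC8, hr1⟩ := step_all hb hab hg
    have hb0 : 0 < b := by omega
    have hp : 0 < b ^ rr a b (GG a b y k) := pow_pos hb0 _
    have hdiv : VV b y ((GG a b y k).t + rr a b (GG a b y k)) / b ^ rr a b (GG a b y k)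
        = VV b y ((GG a b y k).t) := VV_div_pow hy hb0 _ _
    have hVlow : (GG a b y k).lo * b ^ rr a b (GG a b y k)
        ≤ VV b y ((GG a b y k).t + rr a b (GG a b y k)) := by
      refine (Nat.le_div_iff_mul_le hp).1 ?_
      omega
    have hVhigh : VV b y ((GG a b y k).t + rr a b (GG a b y k)) + 1
        ≤ ((GG a b y k).hi + 1) * b ^ rr a b (GG a b y k) := by
      have h1 : VV b y ((GG a b y k).t + rr a b (GG a b y k)) / b ^ rr a b (GG a b y k)
          < (GG a b y k).hi + 1 := by omega
      have := (Nat.div_lt_iff_lt_mul hp).1 h1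
      omega
    have hP0 : (step a b (GG a b y k) 0).lo
        ≤ VV b y ((GG a b y k).t + rr a b (GG a b y k)) := by
      rw [hC2]; exact hVlow
    have hPpk : (step a b (GG a b y k) (pk a b y (GG a b y k))).lo
        ≤ VV b y ((GG a b y k).t + rr a b (GG a b y k)) :=
      Nat.findGreatest_spec
        (P := fun x => (step a b (GG a b y k) x).lo
          ≤ VV b y ((GG a b y k).t + rr a b (GG a b y k)))
        (Nat.zero_le _) hP0
    have hpk_le : pk a b y (GG a b y k) ≤ a - 1 := Nat.findGreatest_le _
    have hup : VV b y ((GG a b y k).t + rr a b (GG a b y k))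
        ≤ (step a b (GG a b y k) (pk a b y (GG a b y k))).hi := by
      rcases Nat.lt_or_ge (pk a b y (GG a b y k)) (a - 1) with hlt | hge
      · have hng := Nat.findGreatest_is_greatest
          (P := fun x => (step a b (GG a b y k) x).lo
            ≤ VV b y ((GG a b y k).t + rr a b (GG a b y k)))
          (k := pk a b y (GG a b y k) + 1) (n := a - 1) (by
            show pk a b y (GG a b y k) < pk a b y (GG a b y k) + 1
            omega) (by omega)
        have hadj := hC3 (pk a b y (GG a b y k))
        simp only [not_le] at hng
        omega
      · have hpe : pk a b y (GG a b y k) = a - 1 := by omega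
        rw [hpe]
        have := hC4
        omega
    refine ⟨hC5 _ (by omega), ?_, ?_⟩
    · show (step a b (GG a b y k) (pk a b y (GG a b y k))).lo
        ≤ VV b y ((step a b (GG a b y k) (pk a b y (GG a b y k))).t)
      rw [hC1]
      exact hPpk
    · show VV b y ((step a b (GG a b y k) (pk a b y (GG a b y k))).t)
        ≤ (step a b (GG a b y k) (pk a b y (GG a b y k))).hi
      rw [hC1]
      exact hup

lemma ct_surj (hb : 2 ≤ b) (hab : b ≤ a) {y : ℕ → ℕ} (hy : ∀ i, y i < b) :
    ∃ u : ℕ → ℕ, (∀ i, u i < a) ∧ ct a b u = y := by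
  have ha2 : 2 ≤ a := by omega
  refine ⟨uy a b y, fun i => uy_lt ha2 y i, ?_⟩
  funext k
  rw [ct_eq_dW, FF_uy]
  obtain ⟨hg, hl, hr⟩ := GG_inv hb hab hy (k + 1)
  have htk : k + 2 ≤ (GG a b y (k + 1)).t := by
    have h1 := (FF_good hb hab (u := uy a b y) (fun i => uy_lt ha2 y i) (k + 1)).2
    rw [FF_uy] at h1
    exact h1
  have hb0 : (0:ℕ) < b := by omega
  have hdiv : VV b y ((GG a b y (k + 1)).t) / b = VV b y ((GG a b y (k + 1)).t - 1) := by
    have h2 := VV_div_pow hy hb0 ((GG a b y (k + 1)).t - 1) 1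
    rw [pow_one] at h2
    have h3 : (GG a b y (k + 1)).t - 1 + 1 = (GG a b y (k + 1)).t := by omega
    rw [h3] at h2
    exact h2
  have hW : VV b y ((GG a b y (k + 1)).t - 1) = (GG a b y (k + 1)).lo / b := by
    have l1 : (GG a b y (k + 1)).lo / b ≤ VV b y ((GG a b y (k + 1)).t) / b :=
      Nat.div_le_div_right hl
    have l2 : VV b y ((GG a b y (k + 1)).t) / b ≤ (GG a b y (k + 1)).hi / b :=
      Nat.div_le_div_right hr
    have l3 := hg.floor_eq
    omega
  have hdig := VV_digit hb0 hy ((GG a b y (k + 1)).t - 1) k (by omega)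
  rw [hW] at hdig
  unfold dW
  have he : (GG a b y (k + 1)).t - 1 - 1 - k = (GG a b y (k + 1)).t - 2 - k := by omega
  rw [he] at hdig
  exact hdig

end S14

/-- The induced map `c̃ : X^ω → Y^ω` of a colouring `c` of nonempty finite words:
the `k`-th letter of `c̃ u` is `c` applied to the prefix of `u` of length `k+1`. -/
def ctil {X Y : Type*} (c : List X → Y) (u : ℕ → X) : ℕ → Y :=
  fun k => c (List.ofFn fun i : Fin (k + 1) => u i)

/-- For integers `n, m ≥ 1`, with `X = {0,…,n}` and `Y = {0,…,m}`, there exists a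
colouring `c : X⁺ → Y` of the `(n+1)`-ary Cantor tree whose induced map
`c̃ : X^ω → Y^ω` is a bijection if and only if `n ≥ m`. -/
theorem stmt14 (n m : ℕ) (hn : 1 ≤ n) (hm : 1 ≤ m) :
    (∃ c : List (Fin (n + 1)) → Fin (m + 1), Function.Bijective (ctil c)) ↔ m ≤ n := by
  constructor
  · rintro ⟨c, hbij⟩
    by_contra hmn
    push_neg at hmn
    have hcard : ¬ Function.Surjective (fun x : Fin (n + 1) => c [x]) := by
      intro hs
      have h1 := Fintype.card_le_of_surjective _ hs
      simp only [Fintype.card_fin] at h1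
      omega
    have hex : ∃ y0 : Fin (m + 1), ∀ x, c [x] ≠ y0 := by
      by_contra hc
      push_neg at hc
      exact hcard fun y0 => by
        obtain ⟨x, hx⟩ := hc y0
        exact ⟨x, hx⟩
    obtain ⟨y0, hy0⟩ := hex
    obtain ⟨u, hu⟩ := hbij.2 (fun _ => y0)
    have h0 : c [u 0] = y0 := by
      have h1 := congrFun hu 0
      simpa [ctil, List.ofFn_succ] using h1
    exact hy0 (u 0) h0
  · intro hmn
    have hb : 2 ≤ m + 1 := by omega
    have hab : m + 1 ≤ n + 1 := by omega
    have hcwlt : ∀ l : List ℕ, S14.cw (n + 1) (m + 1) l < m + 1 := by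
      intro l
      unfold S14.cw S14.dW
      exact Nat.mod_lt _ (by omega)
    refine ⟨fun w => ⟨S14.cw (n + 1) (m + 1) (w.map Fin.val), hcwlt _⟩, ?_, ?_⟩
    · -- injective
      intro u u' he
      have hval : ∀ (v : ℕ → Fin (n + 1)) (k : ℕ),
          S14.ct (n + 1) (m + 1) (fun i => (v i : ℕ)) k
            = S14.cw (n + 1) (m + 1) ((List.ofFn fun i : Fin (k + 1) => v i).map Fin.val) := by
        intro v k
        rw [List.map_ofFn]
        rfl
      by_contra hne
      have hne2 : (fun i => ((u i : ℕ))) ≠ (fun i => ((u' i : ℕ))) := by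
        intro hfe
        apply hne
        funext i
        exact Fin.ext (congrFun hfe i)
      apply S14.ct_inj hb hab (fun i => (u i).isLt) (fun i => (u' i).isLt) hne2
      funext k
      rw [hval u k, hval u' k]
      have h2 := congrFun he k
      have h3 := congrArg Fin.val h2
      exact h3
    · -- surjective
      intro y
      obtain ⟨v, hv, hct⟩ := S14.ct_surj hb hab (y := fun i => (y i : ℕ))
        (fun i => (y i).isLt)
      refine ⟨fun i => ⟨v i, hv i⟩, ?_⟩
      funext k
      apply Fin.ext
      show S14.cw (n + 1) (m + 1)
        ((List.ofFn fun i : Fin (k + 1) => (⟨v i, hv i⟩ : Fin (n + 1))).map Fin.val)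
        = (y k : ℕ)
      rw [List.map_ofFn]
      have h4 : S14.ct (n + 1) (m + 1) v k = (y k : ℕ) := congrFun hct k
      exact h4
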